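/- Let f : ℝ → ℝ be a lift of a circle homeomorphism (continuous, strictly increasing, f(x+1) = f(x)+1) that is differentiable except at finitely many points, with c1 ≤ Df ≤ c2 for constants 0 < c1 < c2, and let v = Var(log Df) < ∞. Suppose x, y ∈ S¹ are such that the open intervals Tᶦ(x,y), 0 ≤ i < q, are pairwise disjoint and avoid the break points. Then for every 0 ≤ l ≤ q: e^{-v} ≤ Df^l(x)/Df^l(y) ≤ e^v, where Df^l denotes the derivative of the l-th iterate (the product of Df along the orbit). -/

import Mathlib

open MeasureTheory

private lemma disjoint_Ioo_cases {a b a' b' : ℝ} (h : a < b) (h' : a' < b')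
    (hd : Disjoint (Set.Ioo a b) (Set.Ioo a' b')) : b ≤ a' ∨ b' ≤ a := by
  by_contra hcon
  push_neg at hcon
  obtain ⟨h1, h2⟩ := hcon
  have hmm : max a a' < min b b' := by
    rcases le_total a a' with hh | hh <;> rcases le_total b b' with hh' | hh' <;>
      simp_all [max_def, min_def] <;> linarith
  set m := (max a a' + min b b') / 2 with hm
  have hm1 : m ∈ Set.Ioo a b := by
    constructor
    · have := le_max_left a a'; have := min_le_left b b'; simp only [hm]; linarith
    · have := le_max_left a a'; have := min_le_left b b'; simp only [hm]; linarith
  have hm2 : m ∈ Set.Ioo a' b' := by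
    constructor
    · have := le_max_right a a'; have := min_le_right b b'; simp only [hm]; linarith
    · have := le_max_right a a'; have := min_le_right b b'; simp only [hm]; linarith
  exact Set.disjoint_left.1 hd hm1 hm2

private lemma chain_var {ι : Type*} [DecidableEq ι] (g : ℝ → ℝ) (c : ℝ) (α β : ι → ℝ) :
    ∀ (S : Finset ι) (d : ℝ),
    (∀ s ∈ S, c ≤ α s ∧ α s < β s ∧ β s ≤ d) →
    (∀ s ∈ S, ∀ t ∈ S, s ≠ t → Disjoint (Set.Ioo (α s) (β s)) (Set.Ioo (α t) (β t))) →
    ∑ s ∈ S, edist (g (α s)) (g (β s)) ≤ eVariationOn g (Set.Icc c d) := by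
  intro S
  induction S using Finset.strongInduction with
  | _ S ih =>
    intro d hmem hdisj
    rcases S.eq_empty_or_nonempty with rfl | hne
    · simp
    obtain ⟨t, htS, htmax⟩ := S.exists_max_image β hne
    have hct : c ≤ α t := (hmem t htS).1
    have hαβt : α t < β t := (hmem t htS).2.1
    have hβd : β t ≤ d := (hmem t htS).2.2
    have hαd : α t ≤ d := le_of_lt (lt_of_lt_of_le hαβt hβd)
    have hsub : S.erase t ⊂ S := Finset.erase_ssubset htS
    have hmem' : ∀ s ∈ S.erase t, c ≤ α s ∧ α s < β s ∧ β s ≤ α t := by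
      intro s hs
      have hsS := Finset.mem_of_mem_erase hs
      have hst : s ≠ t := Finset.ne_of_mem_erase hs
      refine ⟨(hmem s hsS).1, (hmem s hsS).2.1, ?_⟩
      rcases disjoint_Ioo_cases (hmem s hsS).2.1 hαβt (hdisj s hsS t htS hst) with h | h
      · exact h
      · exact absurd (lt_of_lt_of_le (lt_of_le_of_lt h (hmem s hsS).2.1) (htmax s hsS)) (lt_irrefl _)
    have hIH := ih (S.erase t) hsub (α t) hmem'
      (fun s hs u hu hsu => hdisj s (Finset.mem_of_mem_erase hs) u (Finset.mem_of_mem_erase hu) hsu)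
    have hterm : edist (g (α t)) (g (β t)) ≤ eVariationOn g (Set.Icc (α t) d) :=
      eVariationOn.edist_le g ⟨le_refl _, hαd⟩ ⟨le_of_lt hαβt, hβd⟩
    calc ∑ s ∈ S, edist (g (α s)) (g (β s))
        = ∑ s ∈ S.erase t, edist (g (α s)) (g (β s)) + edist (g (α t)) (g (β t)) :=
          (Finset.sum_erase_add _ _ htS).symm
      _ ≤ eVariationOn g (Set.Icc c (α t)) + eVariationOn g (Set.Icc (α t) d) :=
          add_le_add hIH hterm
      _ = eVariationOn g (Set.Icc c d) := by
          have := eVariationOn.Icc_add_Icc g (s := (Set.univ : Set ℝ)) hct hαd (Set.mem_univ (α t))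
          simpa using this

theorem denjoy_ratio_estimate
    (f : ℝ → ℝ) (hfc : Continuous f) (hfm : StrictMono f)
    (hper : ∀ x, f (x + 1) = f x + 1)
    (B : Finset ℝ) (D : ℝ → ℝ)
    (hD : ∀ x, (∀ b ∈ B, ∀ k : ℤ, x ≠ b + k) → HasDerivAt f (D x) x)
    (c1 c2 : ℝ) (hc1 : 0 < c1) (hc12 : c1 < c2)
    (hDbound : ∀ x, c1 ≤ D x ∧ D x ≤ c2)
    (hDper : ∀ x, D (x + 1) = D x)
    (v : ℝ) (hv0 : 0 ≤ v)
    (hvar : eVariationOn (fun x => Real.log (D x)) (Set.Icc 0 1) ≤ ENNReal.ofReal v)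
    (T : ℝ → ℝ) (hT : T = fun x => Int.fract (f x))
    (x y : ℝ) (hx : x ∈ Set.Ico (0:ℝ) 1) (hy : y ∈ Set.Ico (0:ℝ) 1)
    (q : ℕ)
    (hdisj : ∀ i < q, ∀ j < q, i ≠ j →
      Disjoint (Set.uIoo (T^[i] x) (T^[i] y)) (Set.uIoo (T^[j] x) (T^[j] y)))
    (hbreak : ∀ i < q, ∀ b ∈ B, ∀ k : ℤ, (b + k : ℝ) ∉ Set.uIcc (T^[i] x) (T^[i] y)) :
    ∀ l ≤ q,
      Real.exp (-v) ≤
          (∏ s ∈ Finset.range l, D (T^[s] x)) / (∏ s ∈ Finset.range l, D (T^[s] y)) ∧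
        (∏ s ∈ Finset.range l, D (T^[s] x)) / (∏ s ∈ Finset.range l, D (T^[s] y)) ≤
          Real.exp v := by
  intro l hl
  set g : ℝ → ℝ := fun z => Real.log (D z) with hg
  have horb : ∀ z ∈ Set.Ico (0:ℝ) 1, ∀ s : ℕ, T^[s] z ∈ Set.Ico (0:ℝ) 1 := by
    intro z hz s
    induction s with
    | zero => simpa
    | succ n _ =>
      rw [Function.iterate_succ_apply', hT]
      exact ⟨Int.fract_nonneg _, Int.fract_lt_one _⟩
  set a : ℕ → ℝ := fun s => min (T^[s] x) (T^[s] y) with ha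
  set b : ℕ → ℝ := fun s => max (T^[s] x) (T^[s] y) with hb
  -- key variation estimate
  have key : ∑ s ∈ Finset.range l, |g (T^[s] x) - g (T^[s] y)| ≤ v := by
    set S : Finset ℕ := (Finset.range l).filter (fun s => T^[s] x ≠ T^[s] y) with hS
    have hchain : ∑ s ∈ S, edist (g (a s)) (g (b s)) ≤ eVariationOn g (Set.Icc 0 1) := by
      apply chain_var g 0 a b S 1
      · intro s hs
        rw [hS, Finset.mem_filter] at hs
        have h1 := horb x hx s
        have h2 := horb y hy s
        refine ⟨le_min h1.1 h2.1, ?_, ?_⟩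
        · exact min_lt_max.2 hs.2
        · exact le_of_lt (max_lt h1.2 h2.2)
      · intro s hs t ht hst
        rw [hS, Finset.mem_filter, Finset.mem_range] at hs ht
        have := hdisj s (lt_of_lt_of_le hs.1 hl) t (lt_of_lt_of_le ht.1 hl) hst
        simpa [Set.uIoo, ha, hb, min_def, max_def] using this
    have hfull : ∑ s ∈ Finset.range l, edist (g (a s)) (g (b s)) =
        ∑ s ∈ S, edist (g (a s)) (g (b s)) := by
      rw [hS]
      refine (Finset.sum_filter_of_ne ?_).symm
      intro s _ hne heq
      apply hne
      have hab : a s = b s := by simp [ha, hb, heq]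
      rw [hab, edist_self]
    have hEnn : ∑ s ∈ Finset.range l, edist (g (a s)) (g (b s)) ≤ ENNReal.ofReal v :=
      le_trans (le_of_eq hfull) (le_trans hchain hvar)
    have hdistabs : ∀ s : ℕ, dist (g (a s)) (g (b s)) = |g (T^[s] x) - g (T^[s] y)| := by
      intro s
      rcases le_total (T^[s] x) (T^[s] y) with h | h
      · rw [ha, hb]; simp only [min_eq_left h, max_eq_right h]
        rw [Real.dist_eq, abs_sub_comm]
      · rw [ha, hb]; simp only [min_eq_right h, max_eq_left h]
        rw [Real.dist_eq, abs_sub_comm]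
    have hconv : ∑ s ∈ Finset.range l, edist (g (a s)) (g (b s)) =
        ENNReal.ofReal (∑ s ∈ Finset.range l, |g (T^[s] x) - g (T^[s] y)|) := by
      rw [ENNReal.ofReal_sum_of_nonneg (fun s _ => abs_nonneg _)]
      refine Finset.sum_congr rfl (fun s _ => ?_)
      rw [edist_dist, hdistabs s]
    rw [hconv] at hEnn
    exact (ENNReal.ofReal_le_ofReal_iff hv0).1 hEnn
  -- now conclude
  have hDpos : ∀ z, 0 < D z := fun z => lt_of_lt_of_le hc1 (hDbound z).1
  set P := ∏ s ∈ Finset.range l, D (T^[s] x) with hP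
  set Q := ∏ s ∈ Finset.range l, D (T^[s] y) with hQ
  have hPpos : 0 < P := Finset.prod_pos (fun s _ => hDpos _)
  have hQpos : 0 < Q := Finset.prod_pos (fun s _ => hDpos _)
  have hlogPQ : Real.log (P / Q) =
      ∑ s ∈ Finset.range l, (g (T^[s] x) - g (T^[s] y)) := by
    rw [Real.log_div hPpos.ne' hQpos.ne', hP, hQ,
      Real.log_prod (fun s _ => (hDpos _).ne'),
      Real.log_prod (fun s _ => (hDpos _).ne'), ← Finset.sum_sub_distrib]
  have habs : |Real.log (P / Q)| ≤ v := by
    rw [hlogPQ]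
    exact le_trans (Finset.abs_sum_le_sum_abs _ _) key
  obtain ⟨h1, h2⟩ := abs_le.1 habs
  have hexp : Real.exp (Real.log (P / Q)) = P / Q := Real.exp_log (div_pos hPpos hQpos)
  constructor
  · rw [← hexp]; exact Real.exp_le_exp.2 h1
  · rw [← hexp]; exact Real.exp_le_exp.2 h2
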